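/- Let (𝒜, ∧, [·,·]) be a Gerstenhaber algebra over a field k of characteristic zero and let D : 𝒜 → 𝒜 be a k-linear map of degree −1 (D(𝒜^n) ⊆ 𝒜^{n−1}) satisfying D∘D = 0, D(X∧Y) = D(X)∧Y + (−1)^{x+1} X∧D(Y), and D([X,Y]) = [D(X),Y] + (−1)^x [X,D(Y)] for all homogeneous X ∈ 𝒜^x, Y ∈ 𝒜^y. Then for every scalar h ∈ k, the deformed bracket [X,Y]^{hD} := [X,Y] + h·(x·X∧D(Y) − (−1)^x y·D(X)∧Y) is graded skew-symmetric ([X,Y]^{hD} = −(−1)^{xy}[Y,X]^{hD}) and satisfies the graded Jacobi identity [[X,Y]^{hD},Z]^{hD} = [X,[Y,Z]^{hD}]^{hD} − (−1)^{xy}[Y,[X,Z]^{hD}]^{hD}; in particular [·,·] and [X,Y]_0 := x·X∧D(Y) − (−1)^x y·D(X)∧Y are compatible graded Lie brackets. -/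

import Mathlib

/-! STATEMENT 17: deforming the bracket of a Gerstenhaber algebra by a
degree `-1` square-zero derivation `D` yields a graded Lie bracket
`[X,Y]^{hD} = [X,Y] + h·(x·X∧D(Y) − (−1)^x y·D(X)∧Y)` for every `h ∈ k`. -/

noncomputable section

namespace JacobiRevisited17

/-- The deformed bracket `[X,Y]^{hD} = [X,Y] + h·(x·X∧D(Y) − (−1)^x y·D(X)∧Y)`
of elements `X`, `Y` of degrees `x`, `y`. -/
def brD {k 𝒜 : Type*} [Field k] [AddCommGroup 𝒜] [Module k 𝒜]
    (br wg : 𝒜 →ₗ[k] 𝒜 →ₗ[k] 𝒜) (D : 𝒜 →ₗ[k] 𝒜) (h : k)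
    (x y : ℤ) (X Y : 𝒜) : 𝒜 :=
  br X Y +
    h • (x • wg X (D Y) - ((((-1 : ℤˣ) ^ x : ℤˣ) : ℤ) * y) • wg (D X) Y)

private lemma eval_eps (n : ℤ) : (((-1:ℤˣ)^n : ℤˣ) : ℤ) = if Even n then 1 else -1 := by
  by_cases hn : Even n
  · obtain ⟨m, rfl⟩ := hn
    rw [if_pos ⟨m, rfl⟩, zpow_add, Int.units_mul_self]; rfl
  · obtain ⟨m, hm⟩ := Int.not_even_iff_odd.mp hn
    rw [if_neg hn, hm, show (2*m+1:ℤ) = (m+m)+1 by ring, zpow_add, zpow_add,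
      Int.units_mul_self, one_mul, zpow_one]
    rfl

set_option maxHeartbeats 4000000 in
theorem statement17 (k : Type*) [Field k] [CharZero k]
    (𝒜 : Type*) [AddCommGroup 𝒜] [Module k 𝒜]
    -- the grading
    (G : ℤ → Submodule k 𝒜)
    -- the (bilinear) graded Lie bracket and associative product
    (br wg : 𝒜 →ₗ[k] 𝒜 →ₗ[k] 𝒜)
    -- Gerstenhaber algebra axioms (for homogeneous elements)
    (hbr_grade : ∀ (x y : ℤ) (X Y : 𝒜), X ∈ G x → Y ∈ G y → br X Y ∈ G (x + y))
    (hbr_skew : ∀ (x y : ℤ) (X Y : 𝒜), X ∈ G x → Y ∈ G y →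
      br X Y = -((((-1 : ℤˣ) ^ (x * y) : ℤˣ) : ℤ) • br Y X))
    (hbr_jacobi : ∀ (x y z : ℤ) (X Y Z : 𝒜), X ∈ G x → Y ∈ G y → Z ∈ G z →
      br (br X Y) Z =
        br X (br Y Z) - (((-1 : ℤˣ) ^ (x * y) : ℤˣ) : ℤ) • br Y (br X Z))
    (hwg_grade : ∀ (x y : ℤ) (X Y : 𝒜), X ∈ G x → Y ∈ G y → wg X Y ∈ G (x + y + 1))
    (hwg_assoc : ∀ X Y Z : 𝒜, wg (wg X Y) Z = wg X (wg Y Z))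
    (hwg_comm : ∀ (x y : ℤ) (X Y : 𝒜), X ∈ G x → Y ∈ G y →
      wg X Y = (((-1 : ℤˣ) ^ ((x + 1) * (y + 1)) : ℤˣ) : ℤ) • wg Y X)
    (hleibniz : ∀ (x y z : ℤ) (X Y Z : 𝒜), X ∈ G x → Y ∈ G y → Z ∈ G z →
      br X (wg Y Z) =
        wg (br X Y) Z + (((-1 : ℤˣ) ^ (x * (y + 1)) : ℤˣ) : ℤ) • wg Y (br X Z))
    -- the degree `-1` operator `D`
    (D : 𝒜 →ₗ[k] 𝒜)
    (hD_grade : ∀ (n : ℤ) (X : 𝒜), X ∈ G n → D X ∈ G (n - 1))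
    (hDD : ∀ X : 𝒜, D (D X) = 0)
    (hD_wg : ∀ (x y : ℤ) (X Y : 𝒜), X ∈ G x → Y ∈ G y →
      D (wg X Y) = wg (D X) Y + (((-1 : ℤˣ) ^ (x + 1) : ℤˣ) : ℤ) • wg X (D Y))
    (hD_br : ∀ (x y : ℤ) (X Y : 𝒜), X ∈ G x → Y ∈ G y →
      D (br X Y) = br (D X) Y + (((-1 : ℤˣ) ^ x : ℤˣ) : ℤ) • br X (D Y))
    -- the deformation parameter
    (h : k) :
    ∀ (x y z : ℤ) (X Y Z : 𝒜), X ∈ G x → Y ∈ G y → Z ∈ G z →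
      (brD br wg D h x y X Y =
        -((((-1 : ℤˣ) ^ (x * y) : ℤˣ) : ℤ) • brD br wg D h y x Y X)) ∧
      brD br wg D h (x + y) z (brD br wg D h x y X Y) Z =
        brD br wg D h x (y + z) X (brD br wg D h y z Y Z) -
          (((-1 : ℤˣ) ^ (x * y) : ℤˣ) : ℤ) •
            brD br wg D h y (x + z) Y (brD br wg D h x z X Z) := by
  intro x y z X Y Z hX hY hZ
  have hDX := hD_grade x X hX
  have hDY := hD_grade y Y hY
  have hDZ := hD_grade z Z hZ
  have swap : ∀ (a b : ℤ) (A B C : 𝒜), A ∈ G a → B ∈ G b →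
      wg A (wg B C) = (((-1:ℤˣ)^((a+1)*(b+1)) : ℤˣ) : ℤ) • wg B (wg A C) := by
    intro a b A B C hA hB
    rw [← hwg_assoc, hwg_comm a b A B hA hB, map_zsmul, LinearMap.smul_apply, hwg_assoc]
  have hne1 : ¬ Even (1:ℤ) := by decide
  constructor
  · -- skew symmetry
    simp only [brD]
    rw [hbr_skew y x Y X hY hX, hwg_comm y (x-1) Y (D X) hY hDX,
      hwg_comm (y-1) x (D Y) X hDY hX]
    rcases em (Even x) with hx | hx <;> rcases em (Even y) with hy | hy <;>
      simp [eval_eps, Int.even_add, Int.even_sub, Int.even_mul, hx, hy, hne1, ← Int.not_even_iff_odd] <;>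
      simp only [← Int.cast_smul_eq_zsmul k] <;> push_cast <;> module
  · -- Jacobi
    simp only [brD, map_add, map_sub, map_neg, map_smul, map_zsmul, map_zero,
      LinearMap.add_apply, LinearMap.sub_apply, LinearMap.neg_apply, LinearMap.smul_apply,
      LinearMap.zero_apply, smul_add, smul_sub, smul_neg, smul_zero, add_zero, zero_add,
      hDD,
      hbr_jacobi x y z X Y Z hX hY hZ,
      hD_br x y X Y hX hY, hD_br y z Y Z hY hZ, hD_br x z X Z hX hZ,
      hD_wg x (y-1) X (D Y) hX hDY, hD_wg (x-1) y (D X) Y hDX hY,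
      hD_wg y (z-1) Y (D Z) hY hDZ, hD_wg (y-1) z (D Y) Z hDY hZ,
      hD_wg x (z-1) X (D Z) hX hDZ, hD_wg (x-1) z (D X) Z hDX hZ,
      hleibniz x y (z-1) X Y (D Z) hX hY hDZ,
      hleibniz x (y-1) z X (D Y) Z hX hDY hZ,
      hleibniz y x (z-1) Y X (D Z) hY hX hDZ,
      hleibniz y (x-1) z Y (D X) Z hY hDX hZ,
      hbr_skew (x + (y-1) + 1) z (wg X (D Y)) Z (hwg_grade x (y-1) X (D Y) hX hDY) hZ,
      hbr_skew (x-1 + y + 1) z (wg (D X) Y) Z (hwg_grade (x-1) y (D X) Y hDX hY) hZ,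
      hleibniz z x (y-1) Z X (D Y) hZ hX hDY,
      hleibniz z (x-1) y Z (D X) Y hZ hDX hY,
      hbr_skew z x Z X hZ hX, hbr_skew z y Z Y hZ hY,
      hbr_skew z (y-1) Z (D Y) hZ hDY, hbr_skew z (x-1) Z (D X) hZ hDX,
      hbr_skew y x Y X hY hX, hbr_skew y (x-1) Y (D X) hY hDX,
      hwg_assoc,
      hwg_comm (y-1) (x+z) (D Y) (br X Z) hDY (hbr_grade x z X Z hX hZ),
      hwg_comm y (x-1+z) Y (br (D X) Z) hY (hbr_grade (x-1) z (D X) Z hDX hZ),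
      swap y (x-1) Y (D X) (D Z) hY hDX,
      swap (y-1) x (D Y) X (D Z) hDY hX,
      swap (y-1) (x-1) (D Y) (D X) Z hDY hDX]
    rcases em (Even x) with hx | hx <;> rcases em (Even y) with hy | hy <;>
      rcases em (Even z) with hz | hz <;>
      simp [eval_eps, Int.even_add, Int.even_sub, Int.even_mul, hx, hy, hz, hne1, ← Int.not_even_iff_odd] <;>
      simp only [← Int.cast_smul_eq_zsmul k] <;> push_cast <;> module

end JacobiRevisited17
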